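/- The subspace K_∞ := ∩_{i≥0} K_i is a 𝔤-submodule of M, i.e. Y·K_∞ ⊆ K_∞ for every Y ∈ 𝔤; consequently the quotient M_{(𝔫,χ)} := M / K_∞ carries a natural 𝔤-module structure extending the induced 𝔫-action. -/

import Mathlib

variable {k : Type*} [Field k] [CharZero k]
variable {L : Type*} [LieRing L] [LieAlgebra k L]

/-- The descending sequence of subspaces `K_0 = M`,
`K_{i+1} = span { X·m − χ(X)·m : X ∈ 𝔫, m ∈ K_i }`. -/
def Kseq (M : Type*) [AddCommGroup M] [Module k M] [LieRingModule L M]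
    (n : LieSubalgebra k L) (χ : n →ₗ[k] k) : ℕ → Submodule k M
  | 0 => ⊤
  | i + 1 => Submodule.span k
      {w : M | ∃ X : n, ∃ m ∈ Kseq M n χ i, w = ⁅(X : L), m⁆ - χ X • m}

/-- `Z` is killed by every `s`-fold bracketing with elements of `n`. -/
def NilTo (n : LieSubalgebra k L) : ℕ → L → Prop
  | 0 => fun Z => Z = 0
  | s + 1 => fun Z => ∀ X : n, NilTo n s ⁅(X : L), Z⁆

lemma nilTo_of_lcs {n : LieSubalgebra k L} :
    ∀ (s j : ℕ), LieModule.lowerCentralSeries k n L (j + s) = ⊥ →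
      ∀ Z ∈ LieModule.lowerCentralSeries k n L j, NilTo n s Z := by
  intro s
  induction s with
  | zero =>
    intro j h Z hZ
    have : Z ∈ (⊥ : LieSubmodule k n L) := by rw [← h]; exact hZ
    simpa [NilTo] using this
  | succ s ih =>
    intro j h Z hZ X
    apply ih (j + 1)
    · rw [← h]; congr 1; omega
    · rw [LieModule.lowerCentralSeries_succ]
      exact LieSubmodule.lie_mem_lie (LieSubmodule.mem_top X) hZ

lemma key_lemma (M : Type*) [AddCommGroup M] [Module k M] [LieRingModule L M]
    [LieModule k L M] (n : LieSubalgebra k L) (χ : n →ₗ[k] k) :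
    ∀ (s : ℕ) (Z : L), NilTo n s Z → ∀ (i : ℕ), ∀ m ∈ Kseq (k := k) M n χ (i + s),
      ⁅Z, m⁆ ∈ Kseq (k := k) M n χ i := by
  intro s
  induction s with
  | zero =>
    intro Z hZ i m _
    have : Z = 0 := hZ
    simp [this]
  | succ s ih =>
    intro Z hZ i
    induction i with
    | zero => intro m _; simp [Kseq]
    | succ i ihi =>
      intro m hm
      have hm' : m ∈ Submodule.span k
          {w : M | ∃ X : n, ∃ m' ∈ Kseq (k := k) M n χ (i + 1 + s),
            w = ⁅(X : L), m'⁆ - χ X • m'} := hm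
      clear hm
      induction hm' using Submodule.span_induction with
      | mem w hw =>
        obtain ⟨X, m', hm''0, rfl⟩ := hw
        have hm'' : m' ∈ Kseq (k := k) M n χ (i + (s + 1)) := by
          have : i + 1 + s = i + (s + 1) := by omega
          rwa [this] at hm''0
        have h1 : ⁅Z, m'⁆ ∈ Kseq (k := k) M n χ i := ihi m' hm''
        have h2 : ⁅(X : L), ⁅Z, m'⁆⁆ - χ X • ⁅Z, m'⁆ ∈ Kseq (k := k) M n χ (i + 1) := by
          apply Submodule.subset_span
          exact ⟨X, ⁅Z, m'⁆, h1, rfl⟩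
        have h3 : ⁅⁅(X : L), Z⁆, m'⁆ ∈ Kseq (k := k) M n χ (i + 1) := by
          apply ih ⁅(X : L), Z⁆ (hZ X) (i + 1)
          have : i + 1 + s = i + (s + 1) := by omega
          rw [this]; exact hm''
        have hexp : ⁅Z, ⁅(X : L), m'⁆ - χ X • m'⁆ =
            (⁅(X : L), ⁅Z, m'⁆⁆ - χ X • ⁅Z, m'⁆) + ⁅⁅Z, (X : L)⁆, m'⁆ := by
          rw [lie_sub, lie_smul, leibniz_lie Z (X : L) m']
          abel
        rw [hexp]
        refine Submodule.add_mem _ h2 ?_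
        have h4 : ⁅⁅Z, (X : L)⁆, m'⁆ = -⁅⁅(X : L), Z⁆, m'⁆ := by
          rw [← lie_skew (X : L) Z, neg_lie, neg_neg]
        rw [h4]
        exact Submodule.neg_mem _ h3
      | zero => simp
      | add x y _ _ hx hy => rw [lie_add]; exact Submodule.add_mem _ hx hy
      | smul c x _ hx => rw [lie_smul]; exact Submodule.smul_mem _ c hx

/-- if `ad X` is nilpotent on `𝔤` for every `X ∈ 𝔫` and `χ` is a
character of `𝔫`, then `K_∞ = ⋂_i K_i` is a `𝔤`-submodule of `M`. -/
theorem stmt8 [FiniteDimensional k L]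
    (M : Type*) [AddCommGroup M] [Module k M] [LieRingModule L M] [LieModule k L M]
    (n : LieSubalgebra k L)
    (hnil : ∀ X : L, X ∈ n → IsNilpotent ((LieAlgebra.ad k L) X))
    (χ : n →ₗ[k] k) (hχ : ∀ X Y : n, χ ⁅X, Y⁆ = 0)
    (Y : L) (m : M) (hm : m ∈ ⨅ i : ℕ, Kseq (k := k) (L := L) M n χ i) :
    ⁅Y, m⁆ ∈ ⨅ i : ℕ, Kseq (k := k) (L := L) M n χ i := by
  -- Engel: L is a nilpotent n-module
  have hEng : LieModule.IsNilpotent n L := by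
    apply LieAlgebra.isEngelian_of_isNoetherian (R := k)
    intro x
    have hx := hnil (x : L) x.2
    have : (LieModule.toEnd k n L x) = LieAlgebra.ad k L (x : L) := by
      ext y; rfl
    rwa [this]
  obtain ⟨r, hr⟩ := (LieModule.isNilpotent_iff k n L).mp hEng
  have hY : NilTo n r Y := by
    apply nilTo_of_lcs r 0
    · simpa using hr
    · simp
  rw [Submodule.mem_iInf] at hm ⊢
  intro i
  exact key_lemma M n χ r Y hY i m (hm (i + r))
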